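/- arXiv:1504.02852 — 3 statements merged into one kernel-verified Lean document; each statement's English description precedes it below -/
import Mathlib

section
/- Under Assumption 3(a), for every h ∈ ℝ^d the functional G_h : S(H) → ℝ is twice Fréchet differentiable; its gradient at V ∈ S(H) is ∇G_h(V) = −E[(Y(h) − V)/‖Y(h) − V‖_F], and its second derivative at V is the bounded linear operator on S(H) given by A ↦ E[ (1/‖Y(h) − V‖_F)( A − ⟨Y(h) − V, A⟩_F (Y(h) − V)/‖Y(h) − V‖_F² ) ]. -/
open MeasureTheory ProbabilityTheory Filter
open scoped ENNReal NNReal RealInnerProductSpace BigOperators Topology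

noncomputable section

/-- The space `S(H)` of `d × d` real matrices, viewed as a Euclidean space, so that its
norm is the Frobenius norm and its inner product `⟪A, B⟫ = ∑ i j, A i j * B i j = tr (Aᵀ B)`
is the Frobenius inner product. -/
abbrev Mat (d : ℕ) := EuclideanSpace ℝ (Fin d × Fin d)

/-- `Y(h) = (x − h)(x − h)ᵀ`. -/
def Ymat {d : ℕ} (x h : EuclideanSpace ℝ (Fin d)) : Mat d :=
  (WithLp.equiv 2 _).symm (fun p => (x p.1 - h p.1) * (x p.2 - h p.2))

section Aux
variable {E : Type*} [NormedAddCommGroup E] [InnerProductSpace ℝ E]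

def unitv (x : E) : E := ‖x‖⁻¹ • x

def Dop (v : E) : E →L[ℝ] E :=
  ‖v‖⁻¹ • (ContinuousLinearMap.id ℝ E) -
    (‖v‖⁻¹ * (‖v‖ ^ 2)⁻¹) • ((innerSL ℝ v).smulRight v)

lemma Dop_apply (v A : E) :
    Dop v A = ‖v‖⁻¹ • (A - (‖v‖ ^ 2)⁻¹ • (⟪v, A⟫ • v)) := by
  simp [Dop, smul_sub, smul_smul, mul_assoc]

lemma norm_unitv_le (x : E) : ‖unitv x‖ ≤ 1 := by
  rcases eq_or_ne x 0 with rfl | hx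
  · simp [unitv]
  · simp [unitv, norm_smul, inv_mul_cancel₀ (norm_ne_zero_iff.mpr hx)]

lemma norm_Dop_apply_le (v A : E) : ‖Dop v A‖ ≤ 2 / ‖v‖ * ‖A‖ := by
  rcases eq_or_ne v 0 with rfl | hv
  · simp [Dop_apply]
  · have hb : (0:ℝ) < ‖v‖ := norm_pos_iff.mpr hv
    rw [Dop_apply, norm_smul, norm_inv, norm_norm]
    have h1 : ‖A - (‖v‖ ^ 2)⁻¹ • (⟪v, A⟫ • v)‖ ≤ ‖A‖ + ‖A‖ := by
      refine (norm_sub_le _ _).trans ?_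
      gcongr
      rw [norm_smul, norm_smul, Real.norm_eq_abs, Real.norm_eq_abs, abs_inv, abs_pow, abs_norm]
      calc (‖v‖ ^ 2)⁻¹ * (|⟪v, A⟫| * ‖v‖) ≤ (‖v‖ ^ 2)⁻¹ * ((‖v‖ * ‖A‖) * ‖v‖) := by
            gcongr
            exact abs_real_inner_le_norm v A
        _ = ‖A‖ := by field_simp
    calc ‖v‖⁻¹ * ‖A - (‖v‖ ^ 2)⁻¹ • (⟪v, A⟫ • v)‖ ≤ ‖v‖⁻¹ * (‖A‖ + ‖A‖) := by gcongr
      _ = 2 / ‖v‖ * ‖A‖ := by field_simp; ring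

lemma norm_Dop_le (v : E) : ‖Dop v‖ ≤ 2 / ‖v‖ :=
  ContinuousLinearMap.opNorm_le_bound _ (by positivity) (norm_Dop_apply_le v)

lemma rem_crude {v : E} (u : E) :
    ‖unitv u - unitv v - Dop v (u - v)‖ ≤ 1 + 1 + 2 / ‖v‖ * ‖u - v‖ :=
  calc ‖unitv u - unitv v - Dop v (u - v)‖
      ≤ ‖unitv u - unitv v‖ + ‖Dop v (u - v)‖ := norm_sub_le _ _
    _ ≤ (‖unitv u‖ + ‖unitv v‖) + 2 / ‖v‖ * ‖u - v‖ :=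
        add_le_add (norm_sub_le _ _) (norm_Dop_apply_le v _)
    _ ≤ 1 + 1 + 2 / ‖v‖ * ‖u - v‖ := by
        gcongr
        · exact norm_unitv_le u
        · exact norm_unitv_le v

lemma key_quadratic {v : E} (hv : v ≠ 0) (u : E) :
    ‖unitv u - unitv v - Dop v (u - v)‖ ≤ 16 * ‖u - v‖ ^ 2 / ‖v‖ ^ 2 := by
  have hb : (0:ℝ) < ‖v‖ := norm_pos_iff.mpr hv
  set w := u - v with hw
  set b := ‖v‖ with hb_def
  set t := ‖w‖ with ht_def
  have ht : 0 ≤ t := norm_nonneg _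
  rcases le_or_gt b (2 * t) with hcase | hcase
  · refine (rem_crude u).trans ?_
    rw [le_div_iff₀ (by positivity : (0:ℝ) < b ^ 2)]
    have hexp : (1 + 1 + 2 / b * t) * b ^ 2 = 2 * b ^ 2 + 2 * t * b := by
      field_simp; ring
    rw [hexp]
    nlinarith [ht, hb, hcase]
  · -- 2 t < b
    have hu : v + w = u := by rw [hw]; abel
    set a := ‖u‖ with ha_def
    have hat : b - t ≤ a := by
      have h := norm_sub_norm_le v u
      rw [norm_sub_rev] at h
      simp only [← hw, ← ht_def, ← hb_def, ← ha_def] at h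
      linarith
    have ha : (0:ℝ) < a := by linarith
    have hab : a ≤ b + t := by
      have h := norm_add_le v w
      rw [hu] at h
      simp only [← hb_def, ← ht_def, ← ha_def] at h
      linarith
    have htb : t < b / 2 := by linarith
    have hid : unitv u - unitv v - Dop v w =
        (a⁻¹ - b⁻¹) • u + ((b ^ 3)⁻¹ * ⟪v, w⟫) • v := by
      rw [Dop_apply, unitv, unitv, ← ha_def, ← hb_def, ← hu]
      match_scalars <;> ring
    have hsq : a ^ 2 = b ^ 2 + 2 * ⟪v, w⟫ + t ^ 2 := by
      rw [ha_def, ← hu, @norm_add_sq_real]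
    have hane : a ≠ 0 := ne_of_gt ha
    have hbne : b ≠ 0 := ne_of_gt hb
    have habne : a + b ≠ 0 := by positivity
    have hscal : a⁻¹ - b⁻¹ = -(2 * ⟪v, w⟫ + t ^ 2) / (a * b * (a + b)) := by
      have h1 : a⁻¹ - b⁻¹ = (b ^ 2 - a ^ 2) / (a * b * (a + b)) := by
        field_simp; ring
      rw [h1, hsq]; ring_nf
    set I := ⟪v, w⟫ with hI_def
    set D := a * b * (a + b) with hD_def
    set T : E := (b ^ 3)⁻¹ • v - (2 / D) • u with hT_def
    have hdecomp : unitv u - unitv v - Dop v w = I • T - (t ^ 2 / D) • u := by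
      rw [hid, hscal, hT_def]
      match_scalars <;> ring
    have hN : T = (a * b ^ 3 * (a + b))⁻¹ • (((a - b) * (a + 2 * b)) • v - (2 * b ^ 2) • w) := by
      rw [hT_def, ← hu, hD_def]
      match_scalars <;> field_simp <;> ring
    have habs : |a - b| ≤ t := by
      have h := abs_norm_sub_norm_le u v
      simp only [← hw, ← ht_def, ← hb_def, ← ha_def] at h
      exact h
    have hNnorm : ‖((a - b) * (a + 2 * b)) • v - (2 * b ^ 2) • w‖ ≤ 6 * b ^ 2 * t := by
      have heq : ‖((a - b) * (a + 2 * b)) • v - (2 * b ^ 2) • w‖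
          ≤ |a - b| * (a + 2 * b) * b + 2 * b ^ 2 * t := by
        calc ‖((a - b) * (a + 2 * b)) • v - (2 * b ^ 2) • w‖
            ≤ ‖((a - b) * (a + 2 * b)) • v‖ + ‖(2 * b ^ 2) • w‖ := norm_sub_le _ _
          _ = |a - b| * (a + 2 * b) * b + 2 * b ^ 2 * t := by
              rw [norm_smul, norm_smul, Real.norm_eq_abs, Real.norm_eq_abs, abs_mul]
              rw [abs_of_pos (by linarith : (0:ℝ) < a + 2 * b),
                abs_of_pos (by positivity : (0:ℝ) < 2 * b ^ 2)]
      have h7 : a + 2 * b ≤ 4 * b := by linarith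
      have h6 : |a - b| * (a + 2 * b) ≤ t * (4 * b) :=
        mul_le_mul habs h7 (by linarith) ht
      nlinarith [heq, h6, hb, ht]
    have ha2 : b / 2 ≤ a := by linarith
    have hD5 : b ^ 5 / 2 ≤ a * b ^ 3 * (a + b) := by
      have h8 : b / 2 * b ^ 3 * b ≤ a * b ^ 3 * (a + b) := by
        have h9 : b / 2 * b ^ 3 ≤ a * b ^ 3 :=
          mul_le_mul_of_nonneg_right ha2 (by positivity)
        have h10 : b ≤ a + b := by linarith
        exact mul_le_mul h9 h10 hb.le (by positivity)
      nlinarith [h8]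
    have hTnorm : ‖T‖ ≤ 12 * t / b ^ 3 := by
      rw [hN, norm_smul, Real.norm_eq_abs, abs_inv,
        abs_of_pos (by positivity : (0:ℝ) < a * b ^ 3 * (a + b))]
      have hinv : (a * b ^ 3 * (a + b))⁻¹ ≤ (b ^ 5 / 2)⁻¹ := by
        apply inv_anti₀ (by positivity) hD5
      calc (a * b ^ 3 * (a + b))⁻¹ * ‖((a - b) * (a + 2 * b)) • v - (2 * b ^ 2) • w‖
          ≤ (b ^ 5 / 2)⁻¹ * (6 * b ^ 2 * t) :=
            mul_le_mul hinv hNnorm (norm_nonneg _) (by positivity)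
        _ = 12 * t / b ^ 3 := by field_simp; ring
    have hIabs : |I| ≤ b * t := by
      have h := abs_real_inner_le_norm v w
      simpa [← hI_def, ← hb_def, ← ht_def] using h
    have hDpos : (0:ℝ) < D := by rw [hD_def]; positivity
    calc ‖unitv u - unitv v - Dop v w‖ = ‖I • T - (t ^ 2 / D) • u‖ := by rw [hdecomp]
      _ ≤ ‖I • T‖ + ‖(t ^ 2 / D) • u‖ := norm_sub_le _ _
      _ = |I| * ‖T‖ + t ^ 2 / D * a := by
          rw [norm_smul, norm_smul, Real.norm_eq_abs, Real.norm_eq_abs,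
            abs_of_nonneg (by positivity : (0:ℝ) ≤ t ^ 2 / D), ← ha_def]
      _ ≤ (b * t) * (12 * t / b ^ 3) + t ^ 2 / D * a :=
          add_le_add (mul_le_mul hIabs hTnorm (norm_nonneg _) (by positivity)) le_rfl
      _ ≤ 16 * t ^ 2 / b ^ 2 := by
          have h2 : t ^ 2 / D * a = t ^ 2 / (b * (a + b)) := by
            rw [hD_def]; field_simp
          have hbb : (0:ℝ) < b * b := by positivity
          have hba : (0:ℝ) < b * (a + b) := by positivity
          have h3 : t ^ 2 / (b * (a + b)) ≤ t ^ 2 / b ^ 2 := by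
            rw [show (b:ℝ) ^ 2 = b * b by ring, div_le_div_iff₀ hba hbb]
            have h31 : b * b ≤ b * (a + b) :=
              mul_le_mul_of_nonneg_left (by linarith) hb.le
            exact mul_le_mul_of_nonneg_left h31 (sq_nonneg t)
          have h4 : (b * t) * (12 * t / b ^ 3) = 12 * t ^ 2 / b ^ 2 := by
            field_simp
          have hx : (0:ℝ) ≤ t ^ 2 / b ^ 2 := by positivity
          rw [h2, h4]
          have h12 : 12 * t ^ 2 / b ^ 2 = 12 * (t ^ 2 / b ^ 2) := by ring
          have h16 : 16 * t ^ 2 / b ^ 2 = 16 * (t ^ 2 / b ^ 2) := by ring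
          rw [h12, h16]
          linarith

lemma rem_le_linear {v : E} (hv : v ≠ 0) (u : E) :
    ‖unitv u - unitv v - Dop v (u - v)‖ ≤ 16 / ‖v‖ * ‖u - v‖ := by
  have hb : (0:ℝ) < ‖v‖ := norm_pos_iff.mpr hv
  rcases le_or_gt ‖u - v‖ ‖v‖ with h | h
  · refine (key_quadratic hv u).trans ?_
    calc 16 * ‖u - v‖ ^ 2 / ‖v‖ ^ 2 = (16 / ‖v‖ * ‖u - v‖) * (‖u - v‖ / ‖v‖) := by
          field_simp
      _ ≤ (16 / ‖v‖ * ‖u - v‖) * 1 := by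
          refine mul_le_mul_of_nonneg_left ?_ (by positivity)
          rw [div_le_one hb]; exact h
      _ = 16 / ‖v‖ * ‖u - v‖ := mul_one _
  · refine (rem_crude u).trans ?_
    rw [← sub_nonneg]
    have heq : 16 / ‖v‖ * ‖u - v‖ - (1 + 1 + 2 / ‖v‖ * ‖u - v‖) =
        (14 * ‖u - v‖ - 2 * ‖v‖) / ‖v‖ := by
      field_simp; ring
    rw [heq]
    apply div_nonneg (by linarith) hb.le

lemma hasFDerivAt_norm' {v : E} (hv : v ≠ 0) :
    HasFDerivAt (fun x : E => ‖x‖) (innerSL ℝ (unitv v)) v := by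
  have hb : (0:ℝ) < ‖v‖ := norm_pos_iff.mpr hv
  have h1 : HasFDerivAt (fun x : E => ‖x‖ ^ 2) (2 • (innerSL ℝ v)) v :=
    (hasStrictFDerivAt_norm_sq v).hasFDerivAt
  have h2 := h1.sqrt (by positivity)
  have h3 : (fun x : E => Real.sqrt (‖x‖ ^ 2)) = fun x : E => ‖x‖ := by
    funext x; exact Real.sqrt_sq (norm_nonneg x)
  rw [h3] at h2
  convert h2 using 1
  ext A
  rw [Real.sqrt_sq (norm_nonneg v)]
  simp only [unitv, innerSL_apply_apply, ContinuousLinearMap.smul_apply, smul_eq_mul,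
    real_inner_smul_left]
  field_simp
  ring

end Aux

variable {d : ℕ} {Ω : Type*} [MeasurableSpace Ω]

/-- `G_h(V) = E[‖Y(h) − V‖_F − ‖Y(h)‖_F]`. -/
def Gfun (P : Measure Ω) (X : Ω → EuclideanSpace ℝ (Fin d))
    (h : EuclideanSpace ℝ (Fin d)) (V : Mat d) : ℝ :=
  ∫ ω, (‖Ymat (X ω) h - V‖ - ‖Ymat (X ω) h‖) ∂P

/-- The gradient `∇G_h(V) = −E[(Y(h) − V)/‖Y(h) − V‖_F]`. -/
def gradG (P : Measure Ω) (X : Ω → EuclideanSpace ℝ (Fin d))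
    (h : EuclideanSpace ℝ (Fin d)) (V : Mat d) : Mat d :=
  - ∫ ω, ‖Ymat (X ω) h - V‖⁻¹ • (Ymat (X ω) h - V) ∂P

/-- The Hessian operator
`∇²G_h(V)(A) = E[(1/‖Y(h) − V‖_F)(A − ⟪Y(h) − V, A⟫_F (Y(h) − V)/‖Y(h) − V‖_F²)]`. -/
def hessG (P : Measure Ω) (X : Ω → EuclideanSpace ℝ (Fin d))
    (h : EuclideanSpace ℝ (Fin d)) (V : Mat d) (A : Mat d) : Mat d :=
  ∫ ω, ‖Ymat (X ω) h - V‖⁻¹ •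
    (A - (‖Ymat (X ω) h - V‖ ^ 2)⁻¹ • (⟪Ymat (X ω) h - V, A⟫ • (Ymat (X ω) h - V))) ∂P

lemma continuous_Ymat {d : ℕ} (h : EuclideanSpace ℝ (Fin d)) :
    Continuous fun x : EuclideanSpace ℝ (Fin d) => Ymat x h := by
  unfold Ymat
  refine (PiLp.continuous_toLp 2 fun _ : Fin d × Fin d => ℝ).comp
    (continuous_pi fun p => ?_)
  have h1 : Continuous fun x : EuclideanSpace ℝ (Fin d) => x p.1 :=
    (continuous_apply p.1).comp (PiLp.continuous_ofLp 2 _)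
  have h2 : Continuous fun x : EuclideanSpace ℝ (Fin d) => x p.2 :=
    (continuous_apply p.2).comp (PiLp.continuous_ofLp 2 _)
  exact ((h1.sub continuous_const).mul (h2.sub continuous_const))

set_option maxHeartbeats 2000000 in
/-- Under Assumption 3(a), for every `h` the functional `G_h` is twice Fréchet
differentiable on `S(H)`: its Fréchet derivative at `V` is `W ↦ ⟪∇G_h(V), W⟫_F` with
`∇G_h(V) = −E[(Y(h) − V)/‖Y(h) − V‖_F]`, and the map `V ↦ ∇G_h(V)` is itself Fréchet
differentiable at every `V`, with derivative the bounded linear (Hessian) operator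
`A ↦ E[(1/‖Y(h) − V‖_F)(A − ⟪Y(h) − V, A⟫_F (Y(h) − V)/‖Y(h) − V‖_F²)]`. -/
theorem stmt_17
    {d : ℕ} (hd : 1 ≤ d) (P : Measure Ω) [IsProbabilityMeasure P]
    (X : Ω → EuclideanSpace ℝ (Fin d)) (hX : Measurable X)
    -- Assumption 3(a)
    (C : ℝ) (hC : 0 < C)
    (hA3 : ∀ (h : EuclideanSpace ℝ (Fin d)) (V : Mat d),
      (∫⁻ ω, (‖Ymat (X ω) h - V‖₊ : ℝ≥0∞)⁻¹ ∂P) ≤ ENNReal.ofReal C) :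
    ∀ (h : EuclideanSpace ℝ (Fin d)) (V : Mat d),
      HasFDerivAt (fun W => Gfun P X h W) (innerSL ℝ (gradG P X h V)) V ∧
      ∃ Hop : Mat d →L[ℝ] Mat d, (∀ A : Mat d, Hop A = hessG P X h V A) ∧
        HasFDerivAt (fun W => gradG P X h W) Hop V := by
  intro h V
  set Y : Ω → Mat d := fun ω => Ymat (X ω) h with hY_def
  have hYm : Measurable Y := (continuous_Ymat h).measurable.comp hX
  -- basic measurability
  have hvm : Measurable fun ω => Y ω - V := hYm.sub measurable_const
  have hvWm : ∀ W : Mat d, Measurable fun ω => Y ω - W := fun W => hYm.sub measurable_const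
  have hbm : Measurable fun ω => ‖Y ω - V‖ := hvm.norm
  have hum : ∀ W : Mat d, Measurable fun ω => unitv (Y ω - W) := by
    intro W
    exact ((hvWm W).norm.inv).smul (hvWm W)
  have hlt : (∫⁻ ω, (‖Y ω - V‖₊ : ℝ≥0∞)⁻¹ ∂P) < ⊤ :=
    lt_of_le_of_lt (hA3 h V) ENNReal.ofReal_lt_top
  have hennm : Measurable fun ω => (‖Y ω - V‖₊ : ℝ≥0∞)⁻¹ :=
    (hvm.nnnorm.coe_nnreal_ennreal).inv
  -- a.e. nonvanishing
  have hne : ∀ᵐ ω ∂P, Y ω - V ≠ 0 := by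
    filter_upwards [ae_lt_top hennm hlt.ne] with ω hω
    intro h0
    rw [h0] at hω
    simp at hω
  -- integrability of the inverse norm
  have hinv_int : Integrable (fun ω => ‖Y ω - V‖⁻¹) P := by
    refine ⟨hbm.inv.aestronglyMeasurable, ?_⟩
    have hfi : (∫⁻ ω, (‖‖Y ω - V‖⁻¹‖₊ : ℝ≥0∞) ∂P) < ⊤ := by
      refine lt_of_le_of_lt (lintegral_mono fun ω => ?_) hlt
      rcases eq_or_ne (Y ω - V) 0 with h0 | h0
      · simp [h0]
      · rw [nnnorm_inv, nnnorm_norm, ENNReal.coe_inv (by simpa using h0)]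
    exact hfi
  -- integrability of unit vectors
  have hu_int : ∀ W : Mat d, Integrable (fun ω => unitv (Y ω - W)) P := by
    intro W
    refine Integrable.mono' (integrable_const (1:ℝ)) (hum W).aestronglyMeasurable
      (ae_of_all _ fun ω => norm_unitv_le _)
  ---- Part 1 : derivative of Gfun
  have part1 : HasFDerivAt (fun W => Gfun P X h W) (innerSL ℝ (gradG P X h V)) V := by
    have key := hasFDerivAt_integral_of_dominated_loc_of_lip
      (μ := P) (F := fun (W : Mat d) ω => ‖Y ω - W‖ - ‖Y ω‖)
      (F' := fun ω => -(innerSL ℝ (unitv (Y ω - V)))) (x₀ := V)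
      (bound := fun _ => (1:ℝ)) (Metric.ball_mem_nhds V one_pos)
      (Eventually.of_forall fun W => ((hvWm W).norm.sub hYm.norm).aestronglyMeasurable)
      ?_ ?_ ?_ (integrable_const 1) ?_
    · obtain ⟨hF'int, hder⟩ := key
      have hder' : (∫ ω, -(innerSL ℝ (unitv (Y ω - V))) ∂P) = innerSL ℝ (gradG P X h V) := by
        rw [integral_neg, ContinuousLinearMap.integral_comp_comm _ (hu_int V)]
        rw [show gradG P X h V = -∫ ω, unitv (Y ω - V) ∂P from rfl, map_neg]
      rw [hder'] at hder
      exact hder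
    · -- integrability at V
      refine Integrable.mono' (integrable_const ‖V‖)
        (((hvWm V).norm.sub hYm.norm).aestronglyMeasurable) (ae_of_all _ fun ω => ?_)
      have h1 : |‖Y ω - V‖ - ‖Y ω‖| ≤ ‖(Y ω - V) - Y ω‖ := abs_norm_sub_norm_le _ _
      simpa using h1.trans_eq (by rw [sub_sub_cancel_left, norm_neg])
    · -- measurability of F'
      exact ((innerSL ℝ).continuous.comp_aestronglyMeasurable
        (hum V).aestronglyMeasurable).neg
    · -- Lipschitz
      refine ae_of_all _ fun ω => ?_
      have hlip : LipschitzWith 1 fun W : Mat d => ‖Y ω - W‖ - ‖Y ω‖ := by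
        refine LipschitzWith.of_dist_le_mul fun W W' => ?_
        rw [Real.dist_eq, NNReal.coe_one, one_mul, dist_eq_norm]
        have h1 : |‖Y ω - W‖ - ‖Y ω - W'‖| ≤ ‖(Y ω - W) - (Y ω - W')‖ :=
          abs_norm_sub_norm_le _ _
        have h2 : (Y ω - W) - (Y ω - W') = W' - W := by abel
        rw [h2, norm_sub_rev W' W] at h1
        have h3 : (‖Y ω - W‖ - ‖Y ω‖) - (‖Y ω - W'‖ - ‖Y ω‖) =
            ‖Y ω - W‖ - ‖Y ω - W'‖ := by ring
        rw [h3]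
        exact h1
      have h4 := hlip.lipschitzOnWith (s := Metric.ball V 1)
      have h5 : Real.nnabs (1:ℝ) = 1 := by simp
      rw [h5]
      exact h4
    · -- differentiability a.e.
      filter_upwards [hne] with ω hω
      have h1 := hasFDerivAt_norm' hω
      have h2 : HasFDerivAt (fun W : Mat d => Y ω - W)
          (-(ContinuousLinearMap.id ℝ (Mat d))) V := by
        simpa using (hasFDerivAt_id (𝕜 := ℝ) V).const_sub (Y ω)
      have h3 := (h1.comp V h2).sub_const ‖Y ω‖
      convert h3 using 1
      ext A
      simp
      ext A
      simp
  refine ⟨part1, ?_⟩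
  ---- Part 2 : derivative of gradG
  have hsmulR_cont : Continuous fun v : Mat d => (innerSL ℝ v).smulRight v := by
    have hb := (ContinuousLinearMap.smulRightL ℝ (Mat d) (Mat d)).isBoundedBilinearMap.continuous
    exact hb.comp ((innerSL ℝ).continuous.prodMk continuous_id)
  have hDmeas : AEStronglyMeasurable (fun ω => Dop (Y ω - V)) P := by
    have t1 : AEStronglyMeasurable
        (fun ω => ‖Y ω - V‖⁻¹ • (ContinuousLinearMap.id ℝ (Mat d))) P := by
      have hc : Continuous fun r : ℝ => r • (ContinuousLinearMap.id ℝ (Mat d)) :=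
        continuous_id.smul continuous_const
      exact hc.comp_aestronglyMeasurable hbm.inv.aestronglyMeasurable
    have t2 : AEStronglyMeasurable
        (fun ω => (‖Y ω - V‖⁻¹ * (‖Y ω - V‖ ^ 2)⁻¹) •
          ((innerSL ℝ (Y ω - V)).smulRight (Y ω - V))) P := by
      have hc : Continuous fun p : ℝ × Mat d => p.1 • ((innerSL ℝ p.2).smulRight p.2) :=
        continuous_fst.smul (hsmulR_cont.comp continuous_snd)
      have hm : Measurable fun ω => (‖Y ω - V‖⁻¹ * (‖Y ω - V‖ ^ 2)⁻¹, Y ω - V) :=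
        (hbm.inv.mul (hbm.pow_const 2).inv).prodMk hvm
      exact hc.comp_aestronglyMeasurable hm.aestronglyMeasurable
    exact t1.sub t2
  have hDint : Integrable (fun ω => Dop (Y ω - V)) P := by
    refine (hinv_int.const_mul 2).mono' hDmeas (ae_of_all _ fun ω => ?_)
    calc ‖Dop (Y ω - V)‖ ≤ 2 / ‖Y ω - V‖ := norm_Dop_le _
      _ = 2 * ‖Y ω - V‖⁻¹ := by rw [div_eq_mul_inv]
  set TT : Mat d →L[ℝ] Mat d := ∫ ω, Dop (Y ω - V) ∂P with hTT_def
  have hVW : ∀ (W : Mat d) (ω : Ω), (Y ω - W) - (Y ω - V) = V - W := by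
    intro W ω; abel
  refine ⟨TT, fun A => ?_, ?_⟩
  · rw [hTT_def, ContinuousLinearMap.integral_apply hDint A, hessG]
    exact integral_congr_ae (ae_of_all _ fun ω => Dop_apply _ A)
  · rw [hasFDerivAt_iff_tendsto]
    set q : Mat d → Ω → ℝ := fun W ω => ‖W - V‖⁻¹ *
      ‖unitv (Y ω - W) - unitv (Y ω - V) -
        Dop (Y ω - V) ((Y ω - W) - (Y ω - V))‖ with hq_def
    have hDWint : ∀ W : Mat d, Integrable (fun ω => Dop (Y ω - V) (V - W)) P := by
      intro W
      refine (hinv_int.const_mul (2 * ‖V - W‖)).mono'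
        ((ContinuousLinearMap.apply ℝ (Mat d) (V - W)).continuous.comp_aestronglyMeasurable
          hDmeas) (ae_of_all _ fun ω => ?_)
      calc ‖Dop (Y ω - V) (V - W)‖ ≤ 2 / ‖Y ω - V‖ * ‖V - W‖ := norm_Dop_apply_le _ _
        _ = 2 * ‖V - W‖ * ‖Y ω - V‖⁻¹ := by rw [div_eq_mul_inv]; ring
    have hq_meas : ∀ W : Mat d, AEStronglyMeasurable (q W) P := by
      intro W
      simp only [hq_def]
      refine AEStronglyMeasurable.const_mul (AEStronglyMeasurable.norm ?_) _
      refine (((hum W).aestronglyMeasurable).sub ((hum V).aestronglyMeasurable)).sub ?_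
      have heq : (fun ω => Dop (Y ω - V) ((Y ω - W) - (Y ω - V))) =
          fun ω => Dop (Y ω - V) (V - W) := by
        funext ω; rw [hVW]
      rw [heq]
      exact (ContinuousLinearMap.apply ℝ (Mat d) (V - W)).continuous.comp_aestronglyMeasurable
        hDmeas
    have stepA : ∀ W : Mat d,
        ‖W - V‖⁻¹ * ‖gradG P X h W - gradG P X h V - TT (W - V)‖ ≤ ∫ ω, q W ω ∂P := by
      intro W
      have hsplit : gradG P X h W - gradG P X h V - TT (W - V) =
          - ∫ ω, (unitv (Y ω - W) - unitv (Y ω - V) -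
              Dop (Y ω - V) ((Y ω - W) - (Y ω - V))) ∂P := by
        have hgW : gradG P X h W = - ∫ ω, unitv (Y ω - W) ∂P := rfl
        have hgV : gradG P X h V = - ∫ ω, unitv (Y ω - V) ∂P := rfl
        have hrw : (fun ω => unitv (Y ω - W) - unitv (Y ω - V) -
            Dop (Y ω - V) ((Y ω - W) - (Y ω - V))) =
            fun ω => unitv (Y ω - W) - unitv (Y ω - V) - Dop (Y ω - V) (V - W) := by
          funext ω; rw [hVW]
        have e1 : ∫ ω, (unitv (Y ω - W) - unitv (Y ω - V) - Dop (Y ω - V) (V - W)) ∂P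
            = (∫ ω, (unitv (Y ω - W) - unitv (Y ω - V)) ∂P) -
              ∫ ω, Dop (Y ω - V) (V - W) ∂P :=
          integral_sub ((hu_int W).sub (hu_int V)) (hDWint W)
        have e2 : ∫ ω, (unitv (Y ω - W) - unitv (Y ω - V)) ∂P
            = (∫ ω, unitv (Y ω - W) ∂P) - ∫ ω, unitv (Y ω - V) ∂P :=
          integral_sub (hu_int W) (hu_int V)
        rw [hrw, hgW, hgV, hTT_def, ContinuousLinearMap.integral_apply hDint (W - V),
          e1, e2]
        have hneg : ∫ ω, Dop (Y ω - V) (W - V) ∂P = - ∫ ω, Dop (Y ω - V) (V - W) ∂P := by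
          rw [← integral_neg]
          congr 1
          funext ω
          rw [← map_neg]
          congr 1
          abel
        rw [hneg]
        abel
      rw [hsplit, norm_neg]
      calc ‖W - V‖⁻¹ * ‖∫ ω, (unitv (Y ω - W) - unitv (Y ω - V) -
              Dop (Y ω - V) ((Y ω - W) - (Y ω - V))) ∂P‖
          ≤ ‖W - V‖⁻¹ * ∫ ω, ‖unitv (Y ω - W) - unitv (Y ω - V) -
              Dop (Y ω - V) ((Y ω - W) - (Y ω - V))‖ ∂P :=
            mul_le_mul_of_nonneg_left (norm_integral_le_integral_norm _) (by positivity)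
        _ = ∫ ω, q W ω ∂P := (integral_const_mul _ _).symm
    have stepB : Tendsto (fun W => ∫ ω, q W ω ∂P) (𝓝 V) (𝓝 0) := by
      have key : Tendsto (fun W => ∫ ω, q W ω ∂P) (𝓝 V) (𝓝 (∫ (_ : Ω), (0:ℝ) ∂P)) := by
        refine tendsto_integral_filter_of_dominated_convergence
            (bound := fun ω => 16 * ‖Y ω - V‖⁻¹)
            (Eventually.of_forall hq_meas) ?_ (hinv_int.const_mul 16) ?_
        · refine Eventually.of_forall fun W => ?_
          filter_upwards [hne] with ω hω
          have hbne : ‖Y ω - V‖ ≠ 0 := norm_ne_zero_iff.mpr hω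
          rw [Real.norm_eq_abs, abs_of_nonneg (by positivity)]
          rcases eq_or_ne W V with rfl | hWV
          · simp only [hq_def, sub_self, norm_zero, inv_zero, zero_mul]
            positivity
          · have hlin := rem_le_linear hω (Y ω - W)
            have hWVn : ‖W - V‖ ≠ 0 := norm_ne_zero_iff.mpr (sub_ne_zero.mpr hWV)
            simp only [hq_def]
            calc ‖W - V‖⁻¹ * ‖unitv (Y ω - W) - unitv (Y ω - V) -
                  Dop (Y ω - V) ((Y ω - W) - (Y ω - V))‖
                ≤ ‖W - V‖⁻¹ * (16 / ‖Y ω - V‖ * ‖(Y ω - W) - (Y ω - V)‖) :=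
                  mul_le_mul_of_nonneg_left hlin (by positivity)
              _ = 16 * ‖Y ω - V‖⁻¹ := by
                  rw [hVW W ω, norm_sub_rev V W]
                  field_simp
        · filter_upwards [hne] with ω hω
          have hbne : ‖Y ω - V‖ ≠ 0 := norm_ne_zero_iff.mpr hω
          have hquad : ∀ W : Mat d,
              q W ω ≤ 16 * ‖Y ω - V‖⁻¹ * ‖Y ω - V‖⁻¹ * ‖W - V‖ := by
            intro W
            rcases eq_or_ne W V with rfl | hWV
            · simp [hq_def]
            · have hk := key_quadratic hω (Y ω - W)
              have hWVn : ‖W - V‖ ≠ 0 := norm_ne_zero_iff.mpr (sub_ne_zero.mpr hWV)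
              simp only [hq_def]
              calc ‖W - V‖⁻¹ * ‖unitv (Y ω - W) - unitv (Y ω - V) -
                    Dop (Y ω - V) ((Y ω - W) - (Y ω - V))‖
                  ≤ ‖W - V‖⁻¹ * (16 * ‖(Y ω - W) - (Y ω - V)‖ ^ 2 / ‖Y ω - V‖ ^ 2) :=
                    mul_le_mul_of_nonneg_left hk (by positivity)
                _ = 16 * ‖Y ω - V‖⁻¹ * ‖Y ω - V‖⁻¹ * ‖W - V‖ := by
                    rw [hVW W ω, norm_sub_rev V W]
                    field_simp
          have hb0 : Tendsto (fun W : Mat d =>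
              16 * ‖Y ω - V‖⁻¹ * ‖Y ω - V‖⁻¹ * ‖W - V‖) (𝓝 V) (𝓝 0) := by
            have ht : Tendsto (fun W : Mat d => ‖W - V‖) (𝓝 V) (𝓝 0) := by
              have := ((continuous_id.sub continuous_const).norm
                (f := fun W : Mat d => W - V)).tendsto V
              simpa using this
            have := ht.const_mul (16 * ‖Y ω - V‖⁻¹ * ‖Y ω - V‖⁻¹)
            simpa using this
          refine squeeze_zero (fun W => ?_) hquad hb0
          simp only [hq_def]
          positivity
      simpa using key
    have final := squeeze_zero (g := fun W => ∫ ω, q W ω ∂P)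
      (fun W => by positivity) stepA stepB
    simpa using final
end
end

section
/- Let E be a finite-dimensional real inner product space and T : E → E a self-adjoint linear operator such that λ ‖x‖² ≤ ⟨Tx, x⟩ ≤ C ‖x‖² for all x ∈ E, with constants 0 < λ ≤ C. Let α ∈ (1/2,1), c_γ > 0, and γ_k := c_γ k^{−α}. Then there exist positive constants c₀ and c₁ such that for all n ≥ 1: ‖∏_{k=1}^{n−1}(Id − γ_k T)‖_op ≤ c₀ exp(−λ Σ_{k=1}^{n} γ_k), and for all 1 ≤ k ≤ n−1: ‖∏_{j=k+1}^{n−1}(Id − γ_j T)‖_op ≤ c₁ exp(−λ Σ_{j=k}^{n} γ_j), where ‖·‖_op denotes the operator norm and the products are taken in any order (the factors commute); an empty product equals Id. -/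
open scoped BigOperators RealInnerProductSpace

noncomputable section

/-- The ordered product `∏_{k=a}^{b} (Id − γ_k T)` of commuting operators (the value is `Id`
when the index range `[a, b]` is empty). -/
noncomputable def prodIcc {E : Type*} [NormedAddCommGroup E] [NormedSpace ℝ E]
    (T : E →L[ℝ] E) (γ : ℕ → ℝ) (a : ℕ) : ℕ → (E →L[ℝ] E)
  | 0 => if a = 0 then 1 - γ 0 • T else 1
  | b + 1 => if a ≤ b + 1 then (1 - γ (b + 1) • T) * prodIcc T γ a b else 1

section Aux

variable {E : Type*} [NormedAddCommGroup E] [InnerProductSpace ℝ E]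

/-- Cauchy–Schwarz for the nonnegative symmetric bilinear form `⟪S·,·⟫`. -/
lemma aux_cs (S : E →L[ℝ] E) (hS : ∀ x y : E, ⟪S x, y⟫ = ⟪x, S y⟫)
    (hpos : ∀ x : E, 0 ≤ ⟪S x, x⟫) (x y : E) :
    ⟪S x, y⟫ ^ 2 ≤ ⟪S x, x⟫ * ⟪S y, y⟫ := by
  have key : ∀ t : ℝ, 0 ≤ ⟪S y, y⟫ * (t * t) + (2 * ⟪S x, y⟫) * t + ⟪S x, x⟫ := by
    intro t
    have h0 := hpos (x + t • y)
    have hxy : ⟪S y, x⟫ = ⟪S x, y⟫ := by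
      rw [hS y x, real_inner_comm]
    simp only [map_add, map_smul, inner_add_left, inner_add_right,
      real_inner_smul_left, real_inner_smul_right] at h0
    rw [hxy] at h0
    nlinarith [h0]
  have hd := discrim_le_zero (a := ⟪S y, y⟫) (b := 2 * ⟪S x, y⟫) (c := ⟪S x, x⟫) key
  simp only [discrim] at hd
  nlinarith [hd]

lemma opnorm_aux (T : E →L[ℝ] E) (hsa : ∀ x y : E, ⟪T x, y⟫ = ⟪x, T y⟫)
    (lam C : ℝ) (hlam : 0 < lam) (hlamC : lam ≤ C)
    (hlow : ∀ x : E, lam * ‖x‖ ^ 2 ≤ ⟪T x, x⟫)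
    (hup : ∀ x : E, ⟪T x, x⟫ ≤ C * ‖x‖ ^ 2)
    (g : ℝ) (hg0 : 0 ≤ g) (hg1 : g * C ≤ 1) :
    ‖(1 : E →L[ℝ] E) - g • T‖ ≤ 1 - g * lam := by
  have hC : 0 < C := lt_of_lt_of_le hlam hlamC
  set S : E →L[ℝ] E := 1 - g • T with hSdef
  have hSapp : ∀ x : E, S x = x - g • T x := by
    intro x
    simp [hSdef, ContinuousLinearMap.sub_apply]
  have hform : ∀ x : E, ⟪S x, x⟫ = ‖x‖ ^ 2 - g * ⟪T x, x⟫ := by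
    intro x
    rw [hSapp, inner_sub_left, real_inner_smul_left, real_inner_self_eq_norm_sq]
  have hSsa : ∀ x y : E, ⟪S x, y⟫ = ⟪x, S y⟫ := by
    intro x y
    rw [hSapp, hSapp, inner_sub_left, inner_sub_right,
      real_inner_smul_left, real_inner_smul_right, hsa]
  have hpos : ∀ x : E, 0 ≤ ⟪S x, x⟫ := by
    intro x
    rw [hform]
    nlinarith [mul_le_mul_of_nonneg_left (hup x) hg0,
      mul_le_mul_of_nonneg_right hg1 (sq_nonneg ‖x‖)]
  have hub : ∀ x : E, ⟪S x, x⟫ ≤ (1 - g * lam) * ‖x‖ ^ 2 := by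
    intro x
    rw [hform]
    nlinarith [mul_le_mul_of_nonneg_left (hlow x) hg0]
  have hmu : 0 ≤ 1 - g * lam := by nlinarith
  apply ContinuousLinearMap.opNorm_le_bound _ hmu
  intro x
  have hcs := aux_cs S hSsa hpos x (S x)
  have h1 : ⟪S x, S x⟫ = ‖S x‖ ^ 2 := real_inner_self_eq_norm_sq (S x)
  have h2 := hub x
  have h3 := hub (S x)
  have h4 := hpos x
  have h5 := hpos (S x)
  have hrhsnn : 0 ≤ (1 - g * lam) * ‖x‖ ^ 2 := by positivity
  have hA : ⟪S x, x⟫ * ⟪S (S x), S x⟫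
      ≤ ((1 - g * lam) * ‖x‖ ^ 2) * ((1 - g * lam) * ‖S x‖ ^ 2) :=
    mul_le_mul h2 h3 h5 hrhsnn
  rw [h1] at hcs
  have key : (‖S x‖ ^ 2) ^ 2 ≤ (1 - g * lam) ^ 2 * ‖x‖ ^ 2 * ‖S x‖ ^ 2 := by
    nlinarith [hcs, hA]
  by_cases hz : ‖S x‖ = 0
  · rw [hz]; positivity
  · have hzpos : 0 < ‖S x‖ := lt_of_le_of_ne (norm_nonneg _) (Ne.symm hz)
    have h2pos : 0 < ‖S x‖ ^ 2 := by positivity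
    have hsq : ‖S x‖ ^ 2 ≤ ((1 - g * lam) * ‖x‖) ^ 2 := by
      nlinarith [key]
    nlinarith [hsq, norm_nonneg x, mul_nonneg hmu (norm_nonneg x), hzpos]

lemma norm_prodIcc_le (T : E →L[ℝ] E) (γ : ℕ → ℝ) (a : ℕ) (ha : 1 ≤ a)
    (f : ℕ → ℝ) (hf0 : ∀ k, 0 ≤ f k)
    (hf : ∀ k, a ≤ k → ‖(1 : E →L[ℝ] E) - γ k • T‖ ≤ f k) :
    ∀ b, ‖prodIcc T γ a b‖ ≤ ∏ k ∈ Finset.Icc a b, f k := by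
  intro b
  induction b with
  | zero =>
    have h0 : ¬ a = 0 := by omega
    rw [Finset.Icc_eq_empty (by omega), Finset.prod_empty]
    simp only [prodIcc, if_neg h0]
    rw [ContinuousLinearMap.one_def]
    exact ContinuousLinearMap.norm_id_le
  | succ b ih =>
    by_cases hab : a ≤ b + 1
    · simp only [prodIcc, if_pos hab]
      rw [Finset.prod_Icc_succ_top hab]
      calc ‖(1 - γ (b + 1) • T) * prodIcc T γ a b‖
          ≤ ‖(1 : E →L[ℝ] E) - γ (b + 1) • T‖ * ‖prodIcc T γ a b‖ := norm_mul_le _ _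
        _ ≤ f (b + 1) * ∏ k ∈ Finset.Icc a b, f k :=
            mul_le_mul (hf (b + 1) hab) ih (norm_nonneg _)
              (le_trans (norm_nonneg _) (hf (b + 1) hab))
        _ = (∏ k ∈ Finset.Icc a b, f k) * f (b + 1) := mul_comm _ _
    · simp only [prodIcc, if_neg hab]
      rw [Finset.Icc_eq_empty hab, Finset.prod_empty]
      rw [ContinuousLinearMap.one_def]
      exact ContinuousLinearMap.norm_id_le

end Aux

/-- Exponential decay of products `∏ (Id − γ_k T)` for a self-adjoint operator `T` whose
quadratic form is pinched between `λ‖x‖²` and `C‖x‖²` with `0 < λ ≤ C`, and steps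
`γ_k = c_γ k^{−α}`, `α ∈ (1/2, 1)`: `‖∏_{k=1}^{n−1}(Id − γ_k T)‖ ≤ c₀ exp(−λ ∑_{k=1}^n γ_k)`
and `‖∏_{j=k+1}^{n−1}(Id − γ_j T)‖ ≤ c₁ exp(−λ ∑_{j=k}^n γ_j)` for `1 ≤ k ≤ n−1`. -/
theorem stmt_18 {E : Type*} [NormedAddCommGroup E] [InnerProductSpace ℝ E]
    [FiniteDimensional ℝ E]
    (T : E →L[ℝ] E) (hsa : ∀ x y : E, ⟪T x, y⟫ = ⟪x, T y⟫)
    (lam C : ℝ) (hlam : 0 < lam) (hlamC : lam ≤ C)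
    (hlow : ∀ x : E, lam * ‖x‖ ^ 2 ≤ ⟪T x, x⟫)
    (hup : ∀ x : E, ⟪T x, x⟫ ≤ C * ‖x‖ ^ 2)
    (α cγ : ℝ) (hα : 1 / 2 < α ∧ α < 1) (hcγ : 0 < cγ)
    (γ : ℕ → ℝ) (hγ : ∀ k : ℕ, γ k = cγ * (k : ℝ) ^ (-α)) :
    ∃ c₀ c₁ : ℝ, 0 < c₀ ∧ 0 < c₁ ∧
      (∀ n : ℕ, 1 ≤ n →
        ‖prodIcc T γ 1 (n - 1)‖ ≤ c₀ * Real.exp (-lam * ∑ k ∈ Finset.Icc 1 n, γ k)) ∧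
      (∀ n k : ℕ, 1 ≤ k → k ≤ n - 1 →
        ‖prodIcc T γ (k + 1) (n - 1)‖ ≤ c₁ * Real.exp (-lam * ∑ j ∈ Finset.Icc k n, γ j)) := by
  obtain ⟨hα1, hα2⟩ := hα
  have hαpos : 0 < α := by linarith
  have hC : 0 < C := lt_of_lt_of_le hlam hlamC
  have hγnn : ∀ k, 0 ≤ γ k := by
    intro k; rw [hγ]; positivity
  have hγle : ∀ k : ℕ, 1 ≤ k → γ k ≤ cγ := by
    intro k hk
    rw [hγ k]
    have h1 : ((k : ℝ)) ^ (-α) ≤ 1 :=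
      Real.rpow_le_one_of_one_le_of_nonpos (by exact_mod_cast hk) (by linarith)
    nlinarith
  set N : ℕ := ⌈(C * cγ) ^ (α⁻¹)⌉₊ + 1 with hNdef
  have hN : ∀ k, N ≤ k → γ k * C ≤ 1 := by
    intro k hk
    have hk1 : (C * cγ) ^ (α⁻¹) ≤ (k : ℝ) := by
      calc (C * cγ) ^ (α⁻¹) ≤ (⌈(C * cγ) ^ (α⁻¹)⌉₊ : ℝ) := Nat.le_ceil _
        _ ≤ (k : ℝ) := by exact_mod_cast le_trans (Nat.le_succ _) hk
    have hCc : (0 : ℝ) ≤ C * cγ := by positivity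
    have hpow : C * cγ ≤ (k : ℝ) ^ α := by
      calc C * cγ = ((C * cγ) ^ (α⁻¹)) ^ α := (Real.rpow_inv_rpow hCc (by linarith)).symm
        _ ≤ (k : ℝ) ^ α := Real.rpow_le_rpow (by positivity) hk1 (le_of_lt hαpos)
    have hkpos : (0 : ℝ) < (k : ℝ) ^ α := by
      have hk0 : 0 < k := by omega
      exact Real.rpow_pos_of_pos (by exact_mod_cast hk0) _
    rw [hγ, Real.rpow_neg (by positivity)]
    calc cγ * ((k : ℝ) ^ α)⁻¹ * C = (C * cγ) / ((k : ℝ) ^ α) := by ring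
      _ ≤ 1 := (div_le_one hkpos).mpr hpow
  set M : ℝ := 1 + cγ * ‖T‖ with hMdef
  have hM1 : 1 ≤ M := by
    have : 0 ≤ cγ * ‖T‖ := by positivity
    linarith
  set K : ℝ := M * Real.exp (lam * cγ) with hKdef
  have hexp1 : 1 ≤ Real.exp (lam * cγ) := Real.one_le_exp (by positivity)
  have hK1 : 1 ≤ K := by nlinarith
  set f : ℕ → ℝ := fun k => (if k < N then K else 1) * Real.exp (-lam * γ k) with hfdef
  have hf0 : ∀ k, 0 ≤ f k := by
    intro k; simp only [hfdef]; split <;> positivity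
  have hfbound : ∀ k, 1 ≤ k → ‖(1 : E →L[ℝ] E) - γ k • T‖ ≤ f k := by
    intro k hk
    by_cases hkN : k < N
    · have hb : ‖(1 : E →L[ℝ] E) - γ k • T‖ ≤ M := by
        calc ‖(1 : E →L[ℝ] E) - γ k • T‖ ≤ ‖(1 : E →L[ℝ] E)‖ + ‖γ k • T‖ := norm_sub_le _ _
          _ ≤ 1 + cγ * ‖T‖ := by
              have h1 : ‖(1 : E →L[ℝ] E)‖ ≤ 1 := by
                rw [ContinuousLinearMap.one_def]; exact ContinuousLinearMap.norm_id_le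
              have h2 : ‖γ k • T‖ ≤ γ k * ‖T‖ := by
                calc ‖γ k • T‖ ≤ ‖γ k‖ * ‖T‖ := ContinuousLinearMap.opNorm_smul_le _ _
                  _ = γ k * ‖T‖ := by rw [Real.norm_eq_abs, abs_of_nonneg (hγnn k)]
              have h3 := hγle k hk
              nlinarith [norm_nonneg T]
      simp only [hfdef, if_pos hkN, hKdef]
      have he : (1 : ℝ) ≤ Real.exp (lam * cγ) * Real.exp (-lam * γ k) := by
        rw [← Real.exp_add]
        apply Real.one_le_exp
        have := hγle k hk
        nlinarith
      have h3 : M * 1 ≤ M * (Real.exp (lam * cγ) * Real.exp (-lam * γ k)) :=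
        mul_le_mul_of_nonneg_left he (by linarith)
      rw [mul_one, ← mul_assoc] at h3
      linarith
    · push_neg at hkN
      have h1 := opnorm_aux T hsa lam C hlam hlamC hlow hup (γ k) (hγnn k) (hN k hkN)
      have h2 : 1 - γ k * lam ≤ Real.exp (-lam * γ k) := by
        have := Real.add_one_le_exp (-lam * γ k); linarith
      simp only [hfdef, if_neg (not_lt.mpr hkN), one_mul]
      linarith
  have hcore : ∀ a b : ℕ, 1 ≤ a →
      ‖prodIcc T γ a b‖ ≤ K ^ N * Real.exp (-lam * ∑ k ∈ Finset.Icc a b, γ k) := by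
    intro a b ha
    have h1 := norm_prodIcc_le T γ a ha f hf0 (fun k hk => hfbound k (le_trans ha hk)) b
    have h2 : ∏ k ∈ Finset.Icc a b, f k
        = (∏ k ∈ Finset.Icc a b, (if k < N then K else 1))
          * Real.exp (-lam * ∑ k ∈ Finset.Icc a b, γ k) := by
      simp only [hfdef]
      rw [Finset.prod_mul_distrib]
      congr 1
      rw [← Real.exp_sum, ← Finset.mul_sum]
    have h3 : (∏ k ∈ Finset.Icc a b, (if k < N then K else 1)) ≤ K ^ N := by
      rw [Finset.prod_ite (f := fun _ => K) (g := fun _ => (1 : ℝ)),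
        Finset.prod_const, Finset.prod_const, one_pow, mul_one]
      apply pow_le_pow_right₀ hK1
      have hsub : Finset.filter (fun k => k < N) (Finset.Icc a b) ⊆ Finset.range N := by
        intro x hx
        simp only [Finset.mem_filter] at hx
        exact Finset.mem_range.mpr hx.2
      calc (Finset.filter (fun k => k < N) (Finset.Icc a b)).card
          ≤ (Finset.range N).card := Finset.card_le_card hsub
        _ = N := Finset.card_range N
    calc ‖prodIcc T γ a b‖ ≤ ∏ k ∈ Finset.Icc a b, f k := h1
      _ = _ * _ := h2
      _ ≤ K ^ N * Real.exp (-lam * ∑ k ∈ Finset.Icc a b, γ k) :=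
          mul_le_mul_of_nonneg_right h3 (Real.exp_nonneg _)
  refine ⟨K ^ N * Real.exp (lam * cγ), K ^ N * Real.exp (2 * (lam * cγ)),
    by positivity, by positivity, ?_, ?_⟩
  · intro n hn
    obtain ⟨m, rfl⟩ : ∃ m, n = m + 1 := ⟨n - 1, by omega⟩
    simp only [Nat.add_sub_cancel]
    have hsum : ∑ k ∈ Finset.Icc 1 (m + 1), γ k
        = (∑ k ∈ Finset.Icc 1 m, γ k) + γ (m + 1) :=
      Finset.sum_Icc_succ_top (by omega) _
    rw [hsum]
    have hγm := hγle (m + 1) (by omega)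
    have hexp : Real.exp (-lam * ∑ k ∈ Finset.Icc 1 m, γ k)
        ≤ Real.exp (lam * cγ) * Real.exp (-lam * ((∑ k ∈ Finset.Icc 1 m, γ k) + γ (m + 1))) := by
      rw [← Real.exp_add]
      apply Real.exp_le_exp.mpr
      nlinarith [hγnn (m + 1)]
    calc ‖prodIcc T γ 1 m‖ ≤ K ^ N * Real.exp (-lam * ∑ k ∈ Finset.Icc 1 m, γ k) :=
          hcore 1 m le_rfl
      _ ≤ K ^ N * (Real.exp (lam * cγ)
          * Real.exp (-lam * ((∑ k ∈ Finset.Icc 1 m, γ k) + γ (m + 1)))) :=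
          mul_le_mul_of_nonneg_left hexp (by positivity)
      _ = K ^ N * Real.exp (lam * cγ)
          * Real.exp (-lam * ((∑ k ∈ Finset.Icc 1 m, γ k) + γ (m + 1))) := by ring
  · intro n k hk hkn
    obtain ⟨m, rfl⟩ : ∃ m, n = m + 1 := ⟨n - 1, by omega⟩
    simp only [Nat.add_sub_cancel] at hkn ⊢
    have hkm : k ≤ m := hkn
    have hs1 : ∑ j ∈ Finset.Icc k (m + 1), γ j
        = γ k + ∑ j ∈ Finset.Icc (k + 1) (m + 1), γ j := by
      rw [Finset.Icc_add_one_left_eq_Ioc, Finset.Icc_eq_cons_Ioc (by omega : k ≤ m + 1), Finset.sum_cons]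
    have hs2 : ∑ j ∈ Finset.Icc (k + 1) (m + 1), γ j
        = (∑ j ∈ Finset.Icc (k + 1) m, γ j) + γ (m + 1) :=
      Finset.sum_Icc_succ_top (by omega) _
    rw [hs1, hs2]
    have hγm := hγle (m + 1) (by omega)
    have hγk := hγle k hk
    have hexp : Real.exp (-lam * ∑ j ∈ Finset.Icc (k + 1) m, γ j)
        ≤ Real.exp (2 * (lam * cγ))
          * Real.exp (-lam * (γ k + ((∑ j ∈ Finset.Icc (k + 1) m, γ j) + γ (m + 1)))) := by
      rw [← Real.exp_add]
      apply Real.exp_le_exp.mpr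
      nlinarith [hγnn (m + 1), hγnn k]
    calc ‖prodIcc T γ (k + 1) m‖
        ≤ K ^ N * Real.exp (-lam * ∑ j ∈ Finset.Icc (k + 1) m, γ j) :=
          hcore (k + 1) m (by omega)
      _ ≤ K ^ N * (Real.exp (2 * (lam * cγ))
          * Real.exp (-lam * (γ k + ((∑ j ∈ Finset.Icc (k + 1) m, γ j) + γ (m + 1))))) :=
          mul_le_mul_of_nonneg_left hexp (by positivity)
      _ = K ^ N * Real.exp (2 * (lam * cγ))
          * Real.exp (-lam * (γ k + ((∑ j ∈ Finset.Icc (k + 1) m, γ j) + γ (m + 1)))) := by ring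
end
end

section
/- Under Assumptions 1, 2 and 3(b) (with constant C), the following weighted moment bounds hold for the median covariation matrix Γ_m: for every q ∈ ℝ^d, (i) E[ ‖X − q‖ / ‖Y(q) − Γ_m‖_F ] ≤ C √‖Γ_m‖_F + √C, and (ii) E[ ‖X − q‖ / ‖Y(q) − Γ_m‖_F² ] ≤ C √‖Γ_m‖_F + C^{3/4}. -/
open MeasureTheory ProbabilityTheory Filter
open scoped ENNReal NNReal RealInnerProductSpace BigOperators

noncomputable section

variable {d : ℕ} {Ω : Type*} [MeasurableSpace Ω]

section AuxStmt19

open ENNReal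

private lemma aux19_rpow_half (x : ℝ≥0∞) : x ^ ((1:ℝ)/2) * x⁻¹ ≤ (x⁻¹) ^ ((1:ℝ)/2) := by
  rcases eq_or_ne x 0 with rfl | h0
  · simp
  rcases eq_or_ne x ∞ with rfl | ht
  · simp
  rw [← ENNReal.rpow_neg_one x, ← ENNReal.rpow_add _ _ h0 ht, ← ENNReal.rpow_mul]
  norm_num

private lemma aux19_rpow_threequarters (x : ℝ≥0∞) :
    x ^ ((1:ℝ)/2) * (x ^ 2)⁻¹ ≤ ((x ^ 2)⁻¹) ^ ((3:ℝ)/4) := by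
  rcases eq_or_ne x 0 with rfl | h0
  · simp
  rcases eq_or_ne x ∞ with rfl | ht
  · simp [ENNReal.top_pow]
  rw [← ENNReal.rpow_two, ← ENNReal.rpow_neg, ← ENNReal.rpow_add _ _ h0 ht, ← ENNReal.rpow_mul]
  norm_num

private lemma aux19_jensen {Ω : Type*} [MeasurableSpace Ω] (P : Measure Ω)
    [IsProbabilityMeasure P] {f : Ω → ℝ≥0∞} (hf : AEMeasurable f P) {r : ℝ}
    (h0 : 0 < r) (h1 : r < 1) :
    ∫⁻ ω, f ω ^ r ∂P ≤ (∫⁻ ω, f ω ∂P) ^ r := by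
  have hpq : (1/r).HolderConjugate (1/(1-r)) := by
    constructor
    · simp only [one_div, inv_inv, inv_one]; ring
    · positivity
    · have : 0 < 1 - r := by linarith
      positivity
  have := ENNReal.lintegral_mul_le_Lp_mul_Lq P hpq (f := fun ω => f ω ^ r)
    (g := fun _ => 1) (hf.pow_const r) aemeasurable_const
  simpa [← ENNReal.rpow_mul, one_div, inv_inv, mul_inv_cancel₀ h0.ne',
    lintegral_const] using this

private lemma aux19_Ymat_norm {d : ℕ} (x q : EuclideanSpace ℝ (Fin d)) :
    ‖Ymat x q‖ = ‖x - q‖ ^ 2 := by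
  have h1 : ∀ p : Fin d × Fin d, Ymat x q p = (x p.1 - q p.1) * (x p.2 - q p.2) := fun p => rfl
  rw [EuclideanSpace.norm_eq, EuclideanSpace.norm_eq, Real.sq_sqrt (by positivity)]
  rw [show (∑ i, ‖(x - q) i‖ ^ 2) = ∑ i, (x i - q i) ^ 2 by
    refine Finset.sum_congr rfl fun i _ => ?_
    simp [Real.norm_eq_abs, sq_abs]]
  rw [show (∑ p : Fin d × Fin d, ‖Ymat x q p‖ ^ 2)
      = (∑ i, (x i - q i) ^ 2) * (∑ i, (x i - q i) ^ 2) by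
    rw [Finset.sum_mul_sum]
    rw [← Finset.sum_product']
    refine Finset.sum_congr rfl fun p _ => ?_
    simp [h1, Real.norm_eq_abs, mul_pow, sq_abs]]
  rw [Real.sqrt_mul_self (by positivity)]

private lemma aux19_sqrt_add {x y : ℝ} (hx : 0 ≤ x) (hy : 0 ≤ y) :
    Real.sqrt (x + y) ≤ Real.sqrt x + Real.sqrt y := by
  have h := Real.sqrt_le_sqrt (show x + y ≤ (Real.sqrt x + Real.sqrt y) ^ 2 by
    nlinarith [Real.sq_sqrt hx, Real.sq_sqrt hy, Real.sqrt_nonneg x, Real.sqrt_nonneg y,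
      mul_nonneg (Real.sqrt_nonneg x) (Real.sqrt_nonneg y)])
  rwa [Real.sqrt_sq (by positivity)] at h

end AuxStmt19

/-- Weighted moment bounds around the median covariation matrix (used to bound the remainder
terms `r_n` and `r_n'`): for every `q ∈ ℝ^d`,
`E[‖X − q‖/‖Y(q) − Γ_m‖_F] ≤ C√‖Γ_m‖_F + √C` and
`E[‖X − q‖/‖Y(q) − Γ_m‖_F²] ≤ C√‖Γ_m‖_F + C^{3/4}`. -/
theorem stmt_19
    {d : ℕ} (hd : 1 ≤ d) (P : Measure Ω) [IsProbabilityMeasure P]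
    (X : Ω → EuclideanSpace ℝ (Fin d)) (hX : Measurable X)
    -- `m` is the geometric median of `X`: the unique minimizer of `u ↦ E[‖X − u‖ − ‖X‖]`
    (m : EuclideanSpace ℝ (Fin d))
    (hm : ∀ u, (∫ ω, (‖X ω - m‖ - ‖X ω‖) ∂P) ≤ ∫ ω, (‖X ω - u‖ - ‖X ω‖) ∂P)
    (hm_unique : ∀ u, (∀ v, (∫ ω, (‖X ω - u‖ - ‖X ω‖) ∂P) ≤
      ∫ ω, (‖X ω - v‖ - ‖X ω‖) ∂P) → u = m)
    -- `Γ` is the median covariation matrix: the unique minimizer of `G_m`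
    (Γ : Mat d)
    (hΓ : ∀ V, Gfun P X m Γ ≤ Gfun P X m V)
    (hΓ_unique : ∀ V, (∀ W, Gfun P X m V ≤ Gfun P X m W) → V = Γ)
    -- Assumption 1
    (hA1 : ∃ u₁ u₂ : EuclideanSpace ℝ (Fin d), ‖u₁‖ = 1 ∧ ‖u₂‖ = 1 ∧
      LinearIndependent ℝ ![u₁, u₂] ∧
      0 < evariance (fun ω => ⟪u₁, X ω⟫) P ∧ 0 < evariance (fun ω => ⟪u₂, X ω⟫) P)
    -- Assumption 2
    (hA2 : ∃ V₁ V₂ : Mat d, ‖V₁‖ = 1 ∧ ‖V₂‖ = 1 ∧ LinearIndependent ℝ ![V₁, V₂] ∧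
      0 < evariance (fun ω => ⟪V₁, Ymat (X ω) m⟫) P ∧
      0 < evariance (fun ω => ⟪V₂, Ymat (X ω) m⟫) P)
    -- Assumption 3(b)
    (C : ℝ) (hC : 0 < C)
    (hA3 : ∀ (h : EuclideanSpace ℝ (Fin d)) (V : Mat d),
      (∫⁻ ω, (‖Ymat (X ω) h - V‖₊ : ℝ≥0∞)⁻¹ ∂P) ≤ ENNReal.ofReal C ∧
      (∫⁻ ω, ((‖Ymat (X ω) h - V‖₊ : ℝ≥0∞) ^ 2)⁻¹ ∂P) ≤ ENNReal.ofReal C)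
    :
    ∀ q : EuclideanSpace ℝ (Fin d),
      (∫⁻ ω, (‖X ω - q‖₊ : ℝ≥0∞) / (‖Ymat (X ω) q - Γ‖₊ : ℝ≥0∞) ∂P) ≤
        ENNReal.ofReal (C * Real.sqrt ‖Γ‖ + Real.sqrt C) ∧
      (∫⁻ ω, (‖X ω - q‖₊ : ℝ≥0∞) / ((‖Ymat (X ω) q - Γ‖₊ : ℝ≥0∞) ^ 2) ∂P) ≤
        ENNReal.ofReal (C * Real.sqrt ‖Γ‖ + C ^ ((3 : ℝ) / 4)) := by
  intro q
  set s : ℝ≥0∞ := ENNReal.ofReal (Real.sqrt ‖Γ‖) with hs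
  set b : Ω → ℝ≥0∞ := fun ω => (‖Ymat (X ω) q - Γ‖₊ : ℝ≥0∞) with hb
  have hYcont : Continuous fun x : EuclideanSpace ℝ (Fin d) => Ymat x q := by
    unfold Ymat
    refine (PiLp.continuous_toLp 2 _).comp (continuous_pi fun p => ?_)
    exact (((continuous_apply p.1).comp (PiLp.continuous_ofLp 2 _)).sub continuous_const).mul
      (((continuous_apply p.2).comp (PiLp.continuous_ofLp 2 _)).sub continuous_const)
  have hbmeas : Measurable b := by
    exact (((hYcont.sub continuous_const).measurable.comp hX).nnnorm).coe_nnreal_ennreal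
  have hpt : ∀ ω, (‖X ω - q‖₊ : ℝ≥0∞) ≤ s + b ω ^ ((1:ℝ)/2) := by
    intro ω
    have h2 : ‖X ω - q‖ ^ 2 ≤ ‖Γ‖ + ‖Ymat (X ω) q - Γ‖ := by
      rw [← aux19_Ymat_norm]
      calc ‖Ymat (X ω) q‖ = ‖Γ + (Ymat (X ω) q - Γ)‖ := by rw [add_sub_cancel]
        _ ≤ ‖Γ‖ + ‖Ymat (X ω) q - Γ‖ := norm_add_le _ _
    have hle : ‖X ω - q‖ ≤ Real.sqrt ‖Γ‖ + Real.sqrt ‖Ymat (X ω) q - Γ‖ := by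
      calc ‖X ω - q‖ = Real.sqrt (‖X ω - q‖ ^ 2) := (Real.sqrt_sq (norm_nonneg _)).symm
        _ ≤ Real.sqrt (‖Γ‖ + ‖Ymat (X ω) q - Γ‖) := Real.sqrt_le_sqrt h2
        _ ≤ _ := aux19_sqrt_add (norm_nonneg _) (norm_nonneg _)
    calc (‖X ω - q‖₊ : ℝ≥0∞) = ENNReal.ofReal ‖X ω - q‖ := ((ofReal_norm _).trans (enorm_eq_nnnorm _)).symm
      _ ≤ ENNReal.ofReal (Real.sqrt ‖Γ‖ + Real.sqrt ‖Ymat (X ω) q - Γ‖) :=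
          ENNReal.ofReal_le_ofReal hle
      _ = s + ENNReal.ofReal (Real.sqrt ‖Ymat (X ω) q - Γ‖) :=
          ENNReal.ofReal_add (Real.sqrt_nonneg _) (Real.sqrt_nonneg _)
      _ = s + b ω ^ ((1:ℝ)/2) := by
          rw [Real.sqrt_eq_rpow, ← ENNReal.ofReal_rpow_of_nonneg (norm_nonneg _) (by norm_num),
            ofReal_norm, enorm_eq_nnnorm]
  have hCle : s * ENNReal.ofReal C = ENNReal.ofReal (C * Real.sqrt ‖Γ‖) := by
    rw [hs, ← ENNReal.ofReal_mul (Real.sqrt_nonneg _), mul_comm]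
  constructor
  · calc (∫⁻ ω, (‖X ω - q‖₊ : ℝ≥0∞) / b ω ∂P)
        ≤ ∫⁻ ω, (s * (b ω)⁻¹ + ((b ω)⁻¹) ^ ((1:ℝ)/2)) ∂P := by
          refine lintegral_mono fun ω => ?_
          rw [div_eq_mul_inv]
          calc (‖X ω - q‖₊ : ℝ≥0∞) * (b ω)⁻¹ ≤ (s + b ω ^ ((1:ℝ)/2)) * (b ω)⁻¹ :=
                mul_le_mul_left (hpt ω) _
            _ = s * (b ω)⁻¹ + b ω ^ ((1:ℝ)/2) * (b ω)⁻¹ := add_mul _ _ _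
            _ ≤ s * (b ω)⁻¹ + ((b ω)⁻¹) ^ ((1:ℝ)/2) :=
                add_le_add_right (aux19_rpow_half _) _
      _ = s * (∫⁻ ω, (b ω)⁻¹ ∂P) + ∫⁻ ω, ((b ω)⁻¹) ^ ((1:ℝ)/2) ∂P := by
          rw [lintegral_add_left (f := fun ω => s * (b ω)⁻¹) (hbmeas.inv.const_mul s),
              lintegral_const_mul s (f := fun ω => (b ω)⁻¹) hbmeas.inv]
      _ ≤ s * ENNReal.ofReal C + (∫⁻ ω, (b ω)⁻¹ ∂P) ^ ((1:ℝ)/2) := by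
          refine add_le_add (mul_le_mul_right (hA3 q Γ).1 _) ?_
          exact aux19_jensen P hbmeas.inv.aemeasurable (by norm_num) (by norm_num)
      _ ≤ s * ENNReal.ofReal C + (ENNReal.ofReal C) ^ ((1:ℝ)/2) :=
          add_le_add_right (ENNReal.rpow_le_rpow (hA3 q Γ).1 (by norm_num)) _
      _ = ENNReal.ofReal (C * Real.sqrt ‖Γ‖ + Real.sqrt C) := by
          rw [hCle, ENNReal.ofReal_rpow_of_nonneg hC.le (by norm_num),
            ← ENNReal.ofReal_add (by positivity) (by positivity), Real.sqrt_eq_rpow, Real.sqrt_eq_rpow]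
  · calc (∫⁻ ω, (‖X ω - q‖₊ : ℝ≥0∞) / (b ω) ^ 2 ∂P)
        ≤ ∫⁻ ω, (s * ((b ω) ^ 2)⁻¹ + (((b ω) ^ 2)⁻¹) ^ ((3:ℝ)/4)) ∂P := by
          refine lintegral_mono fun ω => ?_
          rw [div_eq_mul_inv]
          calc (‖X ω - q‖₊ : ℝ≥0∞) * ((b ω) ^ 2)⁻¹
              ≤ (s + b ω ^ ((1:ℝ)/2)) * ((b ω) ^ 2)⁻¹ := mul_le_mul_left (hpt ω) _
            _ = s * ((b ω) ^ 2)⁻¹ + b ω ^ ((1:ℝ)/2) * ((b ω) ^ 2)⁻¹ := add_mul _ _ _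
            _ ≤ s * ((b ω) ^ 2)⁻¹ + (((b ω) ^ 2)⁻¹) ^ ((3:ℝ)/4) :=
                add_le_add_right (aux19_rpow_threequarters _) _
      _ = s * (∫⁻ ω, ((b ω) ^ 2)⁻¹ ∂P) + ∫⁻ ω, (((b ω) ^ 2)⁻¹) ^ ((3:ℝ)/4) ∂P := by
          rw [lintegral_add_left (f := fun ω => s * ((b ω) ^ 2)⁻¹) ((hbmeas.pow_const 2).inv.const_mul s),
            lintegral_const_mul s (f := fun ω => ((b ω) ^ 2)⁻¹) (hbmeas.pow_const 2).inv]
      _ ≤ s * ENNReal.ofReal C + (∫⁻ ω, ((b ω) ^ 2)⁻¹ ∂P) ^ ((3:ℝ)/4) := by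
          refine add_le_add (mul_le_mul_right (hA3 q Γ).2 _) ?_
          exact aux19_jensen P (hbmeas.pow_const 2).inv.aemeasurable (by norm_num) (by norm_num)
      _ ≤ s * ENNReal.ofReal C + (ENNReal.ofReal C) ^ ((3:ℝ)/4) :=
          add_le_add_right (ENNReal.rpow_le_rpow (hA3 q Γ).2 (by norm_num)) _
      _ = ENNReal.ofReal (C * Real.sqrt ‖Γ‖ + C ^ ((3:ℝ)/4)) := by
          rw [hCle, ENNReal.ofReal_rpow_of_nonneg hC.le (by norm_num),
            ← ENNReal.ofReal_add (by positivity) (by positivity)]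
end
end
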